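/- For two profiles of monotone, strictly convex, continuous preferences ≿^H and ≿̃^H, the aggregate demand functions coincide on all prices p ∈ ℝ^L_{++} and income profiles w ∈ ℝ^H_{++} if and only if the equilibrium price correspondences coincide on all endowment profiles e^H ∈ ℝ^{HL}_{++}. -/

import Mathlib

namespace Paper

variable {L H : ℕ}

/-- Inner product of a price vector and a commodity bundle. -/
noncomputable def dot (p x : Fin L → ℝ) : ℝ := ∑ i, p i * x i

/-- membership in the consumption set X = ℝ^L_+ -/
def nneg (x : Fin L → ℝ) : Prop := ∀ i, 0 ≤ x i

/-- strictly positive vector (interior of X, resp. p ≫ 0) -/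
def posv (x : Fin L → ℝ) : Prop := ∀ i, 0 < x i

/-- a preference relation on bundles -/
abbrev Pref (L : ℕ) := (Fin L → ℝ) → (Fin L → ℝ) → Prop

/-- strict preference x ≻ y -/
def PStrict (R : Pref L) (x y : Fin L → ℝ) : Prop := R x y ∧ ¬ R y x

/-- complete and transitive preference relation on ℝ^L_+ -/
def IsPref (R : Pref L) : Prop :=
  (∀ x y, nneg x → nneg y → R x y ∨ R y x) ∧
  (∀ x y z, R x y → R y z → R x z)

/-- monotone: u ≫ v implies u ≻ v -/
def MonoWeak (R : Pref L) : Prop :=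
  ∀ u v : Fin L → ℝ, nneg v → (∀ i, v i < u i) → PStrict R u v

/-- monotone: u ≥ v, u ≠ v implies u ≻ v -/
def MonoStrong (R : Pref L) : Prop :=
  ∀ u v : Fin L → ℝ, nneg v → (∀ i, v i ≤ u i) → u ≠ v → PStrict R u v

/-- continuity: closed upper and lower contour sets -/
def ContPref (R : Pref L) : Prop :=
  ∀ x : Fin L → ℝ, IsClosed {y | R y x} ∧ IsClosed {y | R x y}

/-- convexity: u ≿ v implies λu + (1-λ)v ≿ v -/
def PrefConvex (R : Pref L) : Prop :=
  ∀ u v : Fin L → ℝ, nneg u → nneg v → R u v →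
    ∀ l : ℝ, 0 ≤ l → l ≤ 1 → R (l • u + (1 - l) • v) v

/-- strict convexity: u ≿ v, u ≠ v implies λu + (1-λ)v ≻ v for λ ∈ (0,1) -/
def PrefStrictConvex (R : Pref L) : Prop :=
  ∀ u v : Fin L → ℝ, nneg u → nneg v → R u v → u ≠ v →
    ∀ l : ℝ, 0 < l → l < 1 → PStrict R (l • u + (1 - l) • v) v

/-- the budget set B(p) = {x ∈ ℝ^L_+ : p·x ≤ 1} -/
def Budget (p x : Fin L → ℝ) : Prop := nneg x ∧ dot p x ≤ 1

/-- x is a ≿-maximizer on the budget set B(p) (Walrasian demand) -/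
def IsDemand (R : Pref L) (p x : Fin L → ℝ) : Prop :=
  Budget p x ∧ ∀ y, Budget p y → R x y

/-- membership in the box X_r = {w : (1+r)⁻¹ 𝟙 ≤ w ≤ (1+r) 𝟙} -/
def InBox (r : ℝ) (x : Fin L → ℝ) : Prop := ∀ i, (1 + r)⁻¹ ≤ x i ∧ x i ≤ 1 + r

/-- Lipschitzian preferences in the sense of Mas-Colell (1977) -/
def Lipschitzian (R : Pref L) : Prop :=
  ∀ r : ℝ, 0 < r → ∃ K : ℝ, 0 < K ∧ ∃ ε : ℝ, 0 < ε ∧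
    ∀ x y z : Fin L → ℝ, InBox r x → InBox r y → InBox r z →
      R x y → R y x → ‖x - z‖ < ε →
      Metric.infDist x {w | R w z} ≤ K * Metric.infDist y {w | R w z}

/-- x is strictly revealed preferred to y through the first n observations:
there is a chain x ≥ x_{i_1}, p_{i_j}·x_{i_{j+1}} < p_{i_j}·x_{i_j}, x_{i_N} ≥ y -/
def RevChain (p xo : ℕ → Fin L → ℝ) (n : ℕ) (x y : Fin L → ℝ) : Prop :=
  ∃ N : ℕ, ∃ idx : Fin (N + 1) → ℕ,
    (∀ j, idx j < n) ∧
    (∀ i, xo (idx 0) i ≤ x i) ∧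
    (∀ j : Fin N, dot (p (idx j.castSucc)) (xo (idx j.succ)) <
       dot (p (idx j.castSucc)) (xo (idx j.castSucc))) ∧
    (∀ i, y i ≤ xo (idx (Fin.last N)) i)

/-- the revealed demand correspondence x^{R_n}(q) -/
def RevDemand (p xo : ℕ → Fin L → ℝ) (n : ℕ) (q : Fin L → ℝ) : Set (Fin L → ℝ) :=
  {x | nneg x ∧ dot q x = 1 ∧
    ¬ ∃ x', nneg x' ∧ dot q x' ≤ 1 ∧ RevChain p xo n x' x}

/-- the strong axiom of revealed preference for the first n observations -/
def SARP (p xo : ℕ → Fin L → ℝ) (n : ℕ) : Prop :=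
  ∀ m : ℕ, 0 < m → ∀ idx : Fin (m + 1) → ℕ, (∀ j, idx j < n) →
    (∀ j j' : Fin (m + 1), j ≠ j' → xo (idx j) ≠ xo (idx j')) →
    (∀ j : Fin m, dot (p (idx j.castSucc)) (xo (idx j.succ)) ≤
       dot (p (idx j.castSucc)) (xo (idx j.castSucc))) →
    dot (p (idx (Fin.last m))) (xo (idx 0)) >
      dot (p (idx (Fin.last m))) (xo (idx (Fin.last m)))

/-- the standard regularity package: complete, transitive, continuous,
monotone, strictly convex -/
def Regular (R : Pref L) : Prop :=
  IsPref R ∧ ContPref R ∧ MonoStrong R ∧ PrefStrictConvex R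

/-- aggregate demand d(p, w¹,…,w^H) = Σ_h f^h(p/w^h), where f^h is the
individual demand function at income 1 -/
noncomputable def aggDem (f : Fin H → (Fin L → ℝ) → (Fin L → ℝ)) (p : Fin L → ℝ) (w : Fin H → ℝ) :
    Fin L → ℝ :=
  fun i => ∑ h, f h (fun j => p j / w h) i

/-- membership in the (relatively interior) simplex Δ^{L-1} -/
def InSimplex (p : Fin L → ℝ) : Prop := posv p ∧ ∑ i, p i = 1

/-- p is a Walrasian equilibrium price for the endowment profile eprof -/
def EqPrice (f : Fin H → (Fin L → ℝ) → (Fin L → ℝ)) (eprof : Fin H → Fin L → ℝ)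
    (p : Fin L → ℝ) : Prop :=
  InSimplex p ∧ ∀ i, ∑ h, (f h (fun j => p j / dot p (eprof h)) i - eprof h i) = 0

/-- the income box W = ×_h [w̲_h, w̄_h] -/
def InW (wlo whi : Fin H → ℝ) (w : Fin H → ℝ) : Prop := ∀ h, wlo h ≤ w h ∧ w h ≤ whi h

/-- the set C_n of allocation profiles consistent with the first n observations:
adding up to aggregate demand, on the budget hyperplanes, satisfying SARP -/
def InC (p : ℕ → Fin L → ℝ) (w : ℕ → Fin H → ℝ) (D : ℕ → Fin L → ℝ) (n : ℕ)
    (xa : ℕ → Fin H → Fin L → ℝ) : Prop :=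
  (∀ k < n, ∀ h, nneg (xa k h)) ∧
  (∀ k < n, ∀ i, ∑ h, xa k h i = D k i) ∧
  (∀ k < n, ∀ h, dot (p k) (xa k h) = w k h) ∧
  (∀ h, SARP p (fun k => xa k h) n)

/-- x is equilibrium-revealed preferred to y by individual h given n observations -/
def EqRevPref (p : ℕ → Fin L → ℝ) (w : ℕ → Fin H → ℝ) (D : ℕ → Fin L → ℝ)
    (n : ℕ) (h : Fin H) (x y : Fin L → ℝ) : Prop :=
  ∀ xa : ℕ → Fin H → Fin L → ℝ, InC p w D n xa → RevChain p (fun k => xa k h) n x y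

/-- the equilibrium revealed demand correspondence x^{R^h_n}(q) -/
def EqRevDemand (p : ℕ → Fin L → ℝ) (w : ℕ → Fin H → ℝ) (D : ℕ → Fin L → ℝ)
    (n : ℕ) (h : Fin H) (q : Fin L → ℝ) : Set (Fin L → ℝ) :=
  {x | nneg x ∧ dot q x = 1 ∧
    ¬ ∃ x', nneg x' ∧ dot q x' ≤ 1 ∧ EqRevPref p w D n h x' x}

/-- Assumption 1: any preference profile distinct from R generates a different
aggregate demand at some price and income profile in ℝ^L_{++} × W -/
def Assumption1 (R : Fin H → Pref L) (f : Fin H → (Fin L → ℝ) → (Fin L → ℝ))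
    (wlo whi : Fin H → ℝ) : Prop :=
  ∀ (R' : Fin H → Pref L) (f' : Fin H → (Fin L → ℝ) → (Fin L → ℝ)),
    (∀ h, Regular (R' h) ∧ Lipschitzian (R' h)) →
    (∀ h q, posv q → IsDemand (R' h) q (f' h q)) →
    R' ≠ R →
    ∃ (pp : Fin L → ℝ) (ww : Fin H → ℝ), posv pp ∧ InW wlo whi ww ∧
      aggDem f' pp ww ≠ aggDem f pp ww

/-- the revealed approximate equilibrium correspondence P^{R_n}(e^H) -/
def RevApproxEq (p : ℕ → Fin L → ℝ) (w : ℕ → Fin H → ℝ) (D : ℕ → Fin L → ℝ)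
    (n : ℕ) (eprof : Fin H → Fin L → ℝ) : Set (Fin L → ℝ) :=
  {q | InSimplex q ∧
    ∃ xa : Fin H → Fin L → ℝ,
      (∀ h, nneg (xa h)) ∧
      (∀ h, dot q (xa h) = dot q (eprof h)) ∧
      (∀ i, ∑ h, (xa h i - eprof h i) = 0) ∧
      ¬ ∃ ya : Fin H → Fin L → ℝ,
        (∀ h, nneg (ya h)) ∧ (∀ h, dot q (ya h) = dot q (eprof h)) ∧
        (∀ h, EqRevPref p w D n h (ya h) (xa h))}

section Helpers

open Filter Topology

variable {L H : ℕ}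

lemma dot_nonneg' {p x : Fin L → ℝ} (hp : ∀ i, 0 ≤ p i) (hx : nneg x) : 0 ≤ dot p x :=
  Finset.sum_nonneg fun i _ => mul_nonneg (hp i) (hx i)

lemma dot_div_left (q x : Fin L → ℝ) (w : ℝ) :
    dot (fun j => q j / w) x = dot q x / w := by
  unfold dot
  rw [Finset.sum_div]
  exact Finset.sum_congr rfl fun i _ => by ring

lemma dot_update_left (q x : Fin L → ℝ) (i : Fin L) (s : ℝ) :
    dot (Function.update q i s) x = dot q x + (s - q i) * x i := by
  unfold dot
  have h : ∀ j ∈ Finset.univ, Function.update q i s j * x j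
      = q j * x j + (if j = i then (s - q i) * x i else 0) := by
    intro j _
    by_cases hj : j = i
    · subst hj; simp [Function.update_self]; ring
    · simp [Function.update_of_ne hj, hj]
  rw [Finset.sum_congr rfl h, Finset.sum_add_distrib, Finset.sum_ite_eq' Finset.univ i
    (fun _ => (s - q i) * x i)]
  simp

lemma dot_update_right (q x : Fin L → ℝ) (i : Fin L) (s : ℝ) :
    dot q (Function.update x i s) = dot q x + q i * (s - x i) := by
  unfold dot
  have h : ∀ j ∈ Finset.univ, q j * Function.update x i s j
      = q j * x j + (if j = i then q i * (s - x i) else 0) := by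
    intro j _
    by_cases hj : j = i
    · subst hj; simp [Function.update_self]; ring
    · simp [Function.update_of_ne hj, hj]
  rw [Finset.sum_congr rfl h, Finset.sum_add_distrib, Finset.sum_ite_eq' Finset.univ i
    (fun _ => q i * (s - x i))]
  simp

lemma dot_combo (q x y : Fin L → ℝ) (a b : ℝ) :
    dot q (a • x + b • y) = a * dot q x + b * dot q y := by
  unfold dot
  rw [Finset.mul_sum, Finset.mul_sum, ← Finset.sum_add_distrib]
  exact Finset.sum_congr rfl fun i _ => by
    simp [Pi.add_apply, Pi.smul_apply, smul_eq_mul]; ring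

lemma monoWeak_of_monoStrong (hL : 0 < L) {R : Pref L} (h : MonoStrong R) : MonoWeak R := by
  intro u v hv hlt
  refine h u v hv (fun i => (hlt i).le) ?_
  intro he
  have := hlt ⟨0, hL⟩
  rw [he] at this
  exact lt_irrefl _ this

lemma demand_dot_eq_one (hL : 0 < L) {R : Pref L} (hmono : MonoStrong R)
    {q x : Fin L → ℝ} (hq : posv q) (hx : IsDemand R q x) : dot q x = 1 := by
  rcases hx with ⟨⟨hxn, hxle⟩, hopt⟩
  by_contra hne
  have hlt : dot q x < 1 := lt_of_le_of_ne hxle hne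
  set i0 : Fin L := ⟨0, hL⟩
  have hq0 : 0 < q i0 := hq i0
  set δ : ℝ := (1 - dot q x) / q i0 with hδ
  have hδpos : 0 < δ := div_pos (by linarith) hq0
  set x' := Function.update x i0 (x i0 + δ) with hx'
  have hx'n : nneg x' := by
    intro i
    by_cases h : i = i0
    · subst h; simp only [x', Function.update_self]
      have := hxn i0; linarith
    · simpa [x', Function.update_of_ne h] using hxn i
  have hdot' : dot q x' = 1 := by
    rw [hx', dot_update_right]
    field_simp [hδ]
    have e : q i0 * δ = 1 - dot q x := by rw [hδ, mul_comm, div_mul_cancel₀ _ hq0.ne']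
    linear_combination e
  have hbud : Budget q x' := ⟨hx'n, le_of_eq hdot'⟩
  have hR : R x x' := hopt x' hbud
  have hP : PStrict R x' x := by
    apply hmono x' x hxn
    · intro i
      by_cases h : i = i0
      · subst h; simp only [x', Function.update_self]; linarith
      · simp [x', Function.update_of_ne h]
    · intro he
      have : x' i0 = x i0 := by rw [he]
      simp only [x', Function.update_self] at this
      linarith
  exact hP.2 hR

lemma demand_unique {R : Pref L} (hpref : IsPref R) (hconv : PrefStrictConvex R)
    {q x y : Fin L → ℝ} (hx : IsDemand R q x) (hy : IsDemand R q y) : x = y := by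
  by_contra hne
  have hRxy : R x y := hx.2 y hy.1
  have hmid : PStrict R ((1/2 : ℝ) • x + (1 - (1/2 : ℝ)) • y) y :=
    hconv x y hx.1.1 hy.1.1 hRxy hne (1/2) (by norm_num) (by norm_num)
  have hbud : Budget q ((1/2 : ℝ) • x + (1 - (1/2 : ℝ)) • y) := by
    constructor
    · intro i
      have h1 := hx.1.1 i; have h2 := hy.1.1 i
      simp only [Pi.add_apply, Pi.smul_apply, smul_eq_mul]
      nlinarith
    · rw [dot_combo]
      have h1 := hx.1.2; have h2 := hy.1.2
      linarith
  exact hmid.2 (hy.2 _ hbud)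

lemma demand_strict {R : Pref L} (hpref : IsPref R) (hconv : PrefStrictConvex R)
    {q x m : Fin L → ℝ} (hx : IsDemand R q x) (hm : Budget q m) (hne : m ≠ x) :
    PStrict R x m := by
  refine ⟨hx.2 m hm, ?_⟩
  intro hRmx
  have hd : IsDemand R q m := ⟨hm, fun y hy => hpref.2 m x y hRmx (hx.2 y hy)⟩
  exact hne (demand_unique hpref hconv hd hx)

lemma demand_update_of_zero {R : Pref L} {q x : Fin L → ℝ} {i : Fin L} {s : ℝ}
    (hx : IsDemand R q x) (hxi : x i = 0) (hs : q i ≤ s) :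
    IsDemand R (Function.update q i s) x := by
  constructor
  · refine ⟨hx.1.1, ?_⟩
    rw [dot_update_left, hxi]
    simpa using hx.1.2
  · intro y hy
    apply hx.2
    refine ⟨hy.1, ?_⟩
    have h1 : dot q y ≤ dot (Function.update q i s) y := by
      have := hy.1 i
      rw [dot_update_left]
      nlinarith
    exact h1.trans hy.2

end Helpers
section Helpers2

open Filter Topology

variable {L H : ℕ}

lemma no_global_zero (hL : 0 < L) {R : Pref L} (hreg : Regular R) {q x : Fin L → ℝ}
    {i : Fin L} (hq : posv q) (hxi : x i = 0)
    (hall : ∀ s, 0 < s → s ≤ q i → IsDemand R (Function.update q i s) x) : False := by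
  obtain ⟨hpref, hcont, hmono, hconv⟩ := hreg
  have hdem0 : IsDemand R q x := by
    have h := hall (q i) (hq i) le_rfl
    rwa [Function.update_eq_self] at h
  have hdot : dot q x = 1 := demand_dot_eq_one hL hmono hq hdem0
  have hek : ∃ k, 0 < x k := by
    by_contra hno
    push_neg at hno
    have h0 : dot q x ≤ 0 :=
      Finset.sum_nonpos fun j _ => mul_nonpos_iff.mpr (Or.inl ⟨(hq j).le, hno j⟩)
    linarith
  obtain ⟨k, hk⟩ := hek
  have hki : k ≠ i := fun h => by rw [h, hxi] at hk; exact lt_irrefl _ hk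
  set sseq : ℕ → ℝ := fun n => min (q i) (q k * x k / (n + 1)) with hsseq
  have hspos : ∀ n : ℕ, 0 < sseq n := by
    intro n
    apply lt_min (hq i)
    apply div_pos (mul_pos (hq k) hk)
    positivity
  have hsle : ∀ n : ℕ, sseq n ≤ q i := fun n => min_le_left _ _
  have hsle2 : ∀ n : ℕ, sseq n ≤ q k * x k / (n + 1) := fun n => min_le_right _ _
  set yseq : ℕ → Fin L → ℝ :=
    fun n => Function.update (Function.update x i 1) k (x k - sseq n / q k) with hyseq
  have hik : i ≠ k := fun h => hki h.symm
  have hyb : ∀ n, Budget (Function.update q i (sseq n)) (yseq n) := by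
    intro n
    constructor
    · intro j
      by_cases hj : j = k
      · rw [hj]
        simp only [hyseq, Function.update_self]
        have h1 : sseq n ≤ q k * x k / (n+1) := hsle2 n
        have h2 : q k * x k / ((n:ℝ)+1) ≤ q k * x k := by
          rw [div_le_iff₀ (by positivity : (0:ℝ) < (n:ℝ)+1)]
          nlinarith [mul_pos (hq k) hk]
        have h3 : sseq n / q k ≤ x k := by
          rw [div_le_iff₀ (hq k)]
          calc sseq n ≤ q k * x k := h1.trans h2
          _ = x k * q k := by ring
        linarith
      · by_cases hji : j = i
        · subst hji
          simp only [hyseq, Function.update_of_ne hj, Function.update_self]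
          norm_num
        · simp only [hyseq, Function.update_of_ne hj, Function.update_of_ne hji]
          exact hdem0.1.1 j
    · have e1 : dot (Function.update q i (sseq n)) (yseq n)
          = dot (Function.update q i (sseq n)) (Function.update x i 1)
            + (Function.update q i (sseq n)) k
              * ((x k - sseq n / q k) - (Function.update x i 1) k) := by
        rw [hyseq]; rw [dot_update_right]
      have e2 : (Function.update q i (sseq n)) k = q k := Function.update_of_ne hki _ _
      have e3 : (Function.update x i 1) k = x k := Function.update_of_ne hki _ _
      have e4 : dot (Function.update q i (sseq n)) (Function.update x i 1)
          = dot (Function.update q i (sseq n)) x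
            + (Function.update q i (sseq n)) i * (1 - x i) := by
        rw [dot_update_right]
      have e5 : (Function.update q i (sseq n)) i = sseq n := Function.update_self _ _ _
      have e6 : dot (Function.update q i (sseq n)) x = dot q x + (sseq n - q i) * x i :=
        dot_update_left _ _ _ _
      rw [e1, e2, e3, e4, e5, e6, hxi, hdot]
      have e8 : x k - sseq n / q k - x k = - (sseq n / q k) := by ring
      rw [e8]
      have aux : q k * (sseq n / q k) = sseq n := by
        rw [mul_comm, div_mul_cancel₀ _ (ne_of_gt (hq k))]
      have e9 : q k * -(sseq n / q k) = - sseq n := by rw [mul_neg, aux]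
      rw [e9]
      ring_nf
      norm_num
  have hRy : ∀ n, R x (yseq n) :=
    fun n => (hall (sseq n) (hspos n) (hsle n)).2 (yseq n) (hyb n)
  set tgt : Fin L → ℝ := Function.update x i 1 with htgt
  have htend : Tendsto yseq atTop (𝓝 tgt) := by
    rw [tendsto_pi_nhds]
    intro j
    by_cases hj : j = k
    · rw [hj]
      have hcoord : (fun n => yseq n k) = fun n => x k - sseq n / q k := by
        funext n; exact Function.update_self _ _ _
      rw [hcoord]
      have hzero : Tendsto (fun n : ℕ => sseq n / q k) atTop (𝓝 0) := by
        have hb : Tendsto (fun n : ℕ => x k * (1 / ((n:ℝ)+1))) atTop (𝓝 0) := by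
          have h2 := tendsto_one_div_add_atTop_nhds_zero_nat.const_mul (x k)
          rwa [mul_zero] at h2
        apply squeeze_zero'
          (Eventually.of_forall fun n => le_of_lt (div_pos (hspos n) (hq k)))
          (Eventually.of_forall fun n => ?_) hb
        have h1 := (div_le_div_iff_of_pos_right (hq k)).mpr (hsle2 n)
        have h2 : q k * x k / ((n:ℝ)+1) / q k = x k * (1/((n:ℝ)+1)) := by
          field_simp [ne_of_gt (hq k), show ((n:ℝ)+1) ≠ 0 by positivity]
        rw [h2] at h1
        exact h1
      have h3 : Tendsto (fun n : ℕ => x k - sseq n / q k) atTop (𝓝 (x k - 0)) :=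
        Tendsto.sub tendsto_const_nhds hzero
      rw [sub_zero] at h3
      have h4 : tgt k = x k := Function.update_of_ne hki _ _
      rwa [h4]
    · have hcoord : (fun n => yseq n j) = fun _ => tgt j := by
        funext n; exact Function.update_of_ne hj _ _
      rw [hcoord]
      exact tendsto_const_nhds
  have hRtgt : R x tgt :=
    (hcont x).2.mem_of_tendsto htend (Eventually.of_forall hRy)
  have hP : PStrict R tgt x := by
    apply hmono tgt x hdem0.1.1
    · intro j
      by_cases hj : j = i
      · subst hj; rw [htgt, Function.update_self, hxi]; norm_num
      · rw [htgt, Function.update_of_ne hj]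
    · intro he
      have : tgt i = x i := by rw [he]
      rw [htgt, Function.update_self, hxi] at this
      norm_num at this
  exact hP.2 hRtgt

end Helpers2
section Helpers3

open Filter Topology

variable {L H : ℕ}

lemma dot_tendsto {pseq xseq : ℕ → Fin L → ℝ} {p x : Fin L → ℝ}
    (hp : Tendsto pseq atTop (𝓝 p)) (hx : Tendsto xseq atTop (𝓝 x)) :
    Tendsto (fun n => dot (pseq n) (xseq n)) atTop (𝓝 (dot p x)) := by
  unfold dot
  apply tendsto_finset_sum
  intro i _
  exact (tendsto_pi_nhds.1 hp i).mul (tendsto_pi_nhds.1 hx i)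

lemma demand_of_tendsto (hL : 0 < L) {R : Pref L} (hreg : Regular R)
    {p : Fin L → ℝ} {pseq xseq : ℕ → Fin L → ℝ} {xlim : Fin L → ℝ}
    (hp : posv p) (hpn : ∀ n, posv (pseq n)) (hdn : ∀ n, IsDemand R (pseq n) (xseq n))
    (hpt : Tendsto pseq atTop (𝓝 p)) (hxt : Tendsto xseq atTop (𝓝 xlim)) :
    IsDemand R p xlim := by
  obtain ⟨hpref, hcont, hmono, hconv⟩ := hreg
  have hnn : nneg xlim := by
    intro i
    have h1 : Tendsto (fun n => xseq n i) atTop (𝓝 (xlim i)) := tendsto_pi_nhds.1 hxt i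
    exact le_of_tendsto_of_tendsto' tendsto_const_nhds h1 (fun n => (hdn n).1.1 i)
  have hdot : dot p xlim = 1 := by
    have h1 := dot_tendsto hpt hxt
    have h2 : (fun n => dot (pseq n) (xseq n)) = fun _ => (1:ℝ) :=
      funext fun n => demand_dot_eq_one hL hmono (hpn n) (hdn n)
    rw [h2] at h1
    exact (tendsto_nhds_unique h1 tendsto_const_nhds).symm ▸ rfl
  refine ⟨⟨hnn, le_of_eq hdot⟩, ?_⟩
  intro y hy
  have hstep : ∀ a : ℝ, 0 ≤ a → a < 1 → R xlim (a • y) := by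
    intro a ha0 ha1
    have hb0 : dot p (a • y) = a * dot p y := by
      unfold dot
      rw [Finset.mul_sum]
      exact Finset.sum_congr rfl fun i _ => by
        simp [Pi.smul_apply, smul_eq_mul]; ring
    have hdy0 : 0 ≤ dot p y := dot_nonneg' (fun i => (hp i).le) hy.1
    have hlt : dot p (a • y) < 1 := by
      rw [hb0]
      calc a * dot p y ≤ a * 1 := by nlinarith [hy.2]
        _ < 1 := by linarith
    have htd : Tendsto (fun n => dot (pseq n) (a • y)) atTop (𝓝 (dot p (a • y))) :=
      dot_tendsto hpt tendsto_const_nhds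
    have hev : ∀ᶠ n in atTop, dot (pseq n) (a • y) < 1 := htd.eventually_lt_const hlt
    have hmem : ∀ᶠ n in atTop, xseq n ∈ {z | R z (a • y)} := by
      filter_upwards [hev] with n hn
      exact (hdn n).2 (a • y)
        ⟨fun i => mul_nonneg ha0 (hy.1 i), hn.le⟩
    exact ((hcont (a • y)).1).mem_of_tendsto hxt hmem
  have hseq : Tendsto (fun n : ℕ => ((1 - 1/((n:ℝ)+1)) • y)) atTop (𝓝 y) := by
    rw [tendsto_pi_nhds]
    intro i
    have h1 : Tendsto (fun n : ℕ => (1 - 1/((n:ℝ)+1))) atTop (𝓝 1) := by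
      have : Tendsto (fun n : ℕ => 1/((n:ℝ)+1)) atTop (𝓝 0) := tendsto_one_div_add_atTop_nhds_zero_nat
      have h2 := (tendsto_const_nhds (x := (1:ℝ)) (f := atTop (α := ℕ))).sub this
      rwa [sub_zero] at h2
    have h3 := h1.mul (tendsto_const_nhds (x := y i) (f := atTop (α := ℕ)))
    rw [one_mul] at h3
    simpa [Pi.smul_apply, smul_eq_mul] using h3
  have hmem2 : ∀ n : ℕ, ((1 - 1/((n:ℝ)+1)) • y) ∈ {z | R xlim z} := by
    intro n
    apply hstep
    · have h1 : 1/((n:ℝ)+1) ≤ 1 := by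
        rw [div_le_one (by positivity)]
        simp
      linarith
    · have h1 : 0 < 1/((n:ℝ)+1) := by positivity
      linarith
  exact ((hcont xlim).2).mem_of_tendsto hseq (Eventually.of_forall hmem2)

lemma upper_convex {R : Pref L} (hpref : IsPref R) (hconv : PrefStrictConvex R)
    {m : Fin L → ℝ} : Convex ℝ {z : Fin L → ℝ | nneg z ∧ R z m} := by
  intro u hu v hv a b ha hb hab
  constructor
  · intro i
    simp only [Pi.add_apply, Pi.smul_apply, smul_eq_mul]
    have h1 := hu.1 i; have h2 := hv.1 i
    nlinarith
  · rcases eq_or_lt_of_le ha with ha0 | hapos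
    · have hb1 : b = 1 := by linarith
      have : a • u + b • v = v := by rw [← ha0, hb1]; simp
      rw [this]; exact hv.2
    rcases eq_or_lt_of_le hb with hb0 | hbpos
    · have ha1 : a = 1 := by linarith
      have : a • u + b • v = u := by rw [← hb0, ha1]; simp
      rw [this]; exact hu.2
    by_cases huv : u = v
    · have : a • u + b • v = v := by rw [huv, ← add_smul, hab]; simp
      rw [this]; exact hv.2
    have ha1 : a < 1 := by linarith
    have hb1 : b < 1 := by linarith
    rcases hpref.1 u v hu.1 hv.1 with hR | hR
    · have hb' : b = 1 - a := by linarith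
      have hc := hconv u v hu.1 hv.1 hR huv a hapos ha1
      rw [hb']
      exact hpref.2 _ v m hc.1 hv.2
    · have ha' : a = 1 - b := by linarith
      have hc := hconv v u hv.1 hu.1 hR (Ne.symm huv) b hbpos hb1
      have hcomb : a • u + b • v = b • v + (1 - b) • u := by rw [ha', add_comm]
      rw [hcomb]
      exact hpref.2 _ u m hc.1 hu.2

end Helpers3
section Helpers4

open Filter Topology

variable {L H : ℕ}

lemma P_of_RHS (hL : 0 < L) (hH : 0 < H)
    {R R' : Fin H → Pref L} {f f' : Fin H → (Fin L → ℝ) → (Fin L → ℝ)}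
    (hreg : ∀ h, Regular (R h))
    (hdem : ∀ h q, posv q → IsDemand (R h) q (f h q))
    (hRHS : ∀ eprof : Fin H → Fin L → ℝ, (∀ h, posv (eprof h)) →
        ∀ p : Fin L → ℝ, EqPrice f eprof p → EqPrice f' eprof p)
    {q : Fin L → ℝ} {v : Fin H → ℝ} (hq : posv q) (hv : ∀ h, 0 < v h)
    (hA : ∀ i, 0 < ∑ h, f h (fun j => q j / v h) i) :
    ∀ i, ∑ h, f h (fun j => q j / v h) i = ∑ h, f' h (fun j => q j / v h) i := by
  have hLne : Nonempty (Fin L) := ⟨⟨0, hL⟩⟩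
  have hHne : Nonempty (Fin H) := ⟨⟨0, hH⟩⟩
  set s := ∑ i, q i with hs
  have hspos : 0 < s := Finset.sum_pos (fun i _ => hq i) Finset.univ_nonempty
  set V := ∑ h, v h with hV
  have hVpos : 0 < V := Finset.sum_pos (fun h _ => hv h) Finset.univ_nonempty
  set A : Fin L → ℝ := fun i => ∑ h, f h (fun j => q j / v h) i with hAdef
  have hwal : ∀ h, dot q (f h (fun j => q j / v h)) = v h := by
    intro h
    have hpv : posv (fun j => q j / v h) := fun j => div_pos (hq j) (hv h)
    have h1 := demand_dot_eq_one hL (hreg h).2.2.1 hpv (hdem h _ hpv)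
    rw [dot_div_left, div_eq_one_iff_eq (ne_of_gt (hv h))] at h1
    exact h1
  have hqA : dot q A = V := by
    unfold dot
    calc ∑ i, q i * A i = ∑ i, ∑ h, q i * f h (fun j => q j / v h) i := by
          apply Finset.sum_congr rfl
          intro i _
          rw [hAdef, Finset.mul_sum]
      _ = ∑ h, ∑ i, q i * f h (fun j => q j / v h) i := Finset.sum_comm
      _ = ∑ h, v h := Finset.sum_congr rfl fun h _ => hwal h
  set ep : Fin H → Fin L → ℝ := fun h i => (v h / V) * A i with hep
  have hepos : ∀ h, posv (ep h) := fun h i => mul_pos (div_pos (hv h) hVpos) (hA i)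
  set phat : Fin L → ℝ := fun i => q i / s with hphat
  have hsimp : InSimplex phat := by
    constructor
    · exact fun i => div_pos (hq i) hspos
    · rw [hphat, ← Finset.sum_div, ← hs, div_self (ne_of_gt hspos)]
  have hdotep : ∀ h, dot phat (ep h) = v h / s := by
    intro h
    unfold dot
    have h1 : ∀ i ∈ Finset.univ, phat i * ep h i = (v h / (s * V)) * (q i * A i) := by
      intro i _
      rw [hphat, hep]
      field_simp
    rw [Finset.sum_congr rfl h1, ← Finset.mul_sum]
    have h2 : ∑ i, q i * A i = V := hqA
    rw [h2]
    field_simp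
  have harg : ∀ h, (fun j => phat j / dot phat (ep h)) = (fun j => q j / v h) := by
    intro h
    funext j
    rw [hdotep h, hphat]
    field_simp [ne_of_gt hspos, ne_of_gt (hv h)]
  have hsumep : ∀ i, ∑ h, ep h i = A i := by
    intro i
    rw [hep]
    rw [← Finset.sum_mul, ← Finset.sum_div, ← hV, div_self (ne_of_gt hVpos), one_mul]
  have hEq : EqPrice f ep phat := by
    refine ⟨hsimp, fun i => ?_⟩
    rw [Finset.sum_sub_distrib]
    have h1 : ∑ h, f h (fun j => phat j / dot phat (ep h)) i = A i := by
      rw [hAdef]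
      apply Finset.sum_congr rfl
      intro h _
      rw [harg h]
    rw [h1, hsumep, sub_self]
  have hEq' := hRHS ep hepos phat hEq
  intro i
  have h3 := hEq'.2 i
  rw [Finset.sum_sub_distrib] at h3
  have h4 : ∑ h, f' h (fun j => phat j / dot phat (ep h)) i
      = ∑ h, f' h (fun j => q j / v h) i := by
    apply Finset.sum_congr rfl
    intro h _
    rw [harg h]
  rw [h4, hsumep] at h3
  have h5 : A i = ∑ h, f h (fun j => q j / v h) i := rfl
  rw [h5] at h3
  linarith

end Helpers4
section Helpers5

open Filter Topology Finset

set_option maxHeartbeats 1000000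

variable {L H : ℕ}

lemma probe_base (hL : 0 < L) (hH : 0 < H)
    {R R' : Fin H → Pref L} {f f' : Fin H → (Fin L → ℝ) → (Fin L → ℝ)}
    (hreg : ∀ h, Regular (R h)) (hreg' : ∀ h, Regular (R' h))
    (hdem : ∀ h q, posv q → IsDemand (R h) q (f h q))
    (hdem' : ∀ h q, posv q → IsDemand (R' h) q (f' h q))
    (hP : ∀ (q : Fin L → ℝ) (v : Fin H → ℝ), posv q → (∀ g, 0 < v g) →
        (∀ i, 0 < ∑ g, f g (fun j => q j / v g) i) →
        ∀ i, ∑ g, f g (fun j => q j / v g) i = ∑ g, f' g (fun j => q j / v g) i)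
    (h : Fin H) {q : Fin L → ℝ} (hq : posv q)
    (hnocz : ∀ i, f h q i ≠ 0 ∨ f' h q i ≠ 0)
    (hne : f h q ≠ f' h q) : False := by
  classical
  obtain ⟨hpref, hcont, hmono, hconv⟩ := hreg h
  obtain ⟨hpref', hcont', hmono', hconv'⟩ := hreg' h
  set xs := f h q with hxs
  set ys := f' h q with hys
  have hdx : IsDemand (R h) q xs := hdem h q hq
  have hdy : IsDemand (R' h) q ys := hdem' h q hq
  have hwx : dot q xs = 1 := demand_dot_eq_one hL hmono hq hdx
  have hwy : dot q ys = 1 := demand_dot_eq_one hL hmono' hq hdy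
  set m : Fin L → ℝ := fun i => (xs i + ys i) / 2 with hm
  have hmnn : nneg m := fun i => by
    have := hdx.1.1 i; have := hdy.1.1 i
    simp only [hm]; linarith
  have hmpos : posv m := by
    intro i
    have h1 := hdx.1.1 i; have h2 := hdy.1.1 i
    rcases hnocz i with h3 | h3
    · have : 0 < xs i := lt_of_le_of_ne h1 (Ne.symm h3)
      simp only [hm]; linarith
    · have : 0 < ys i := lt_of_le_of_ne h2 (Ne.symm h3)
      simp only [hm]; linarith
  have hqm : dot q m = 1 := by
    unfold dot
    have h1 : ∀ i ∈ univ, q i * m i = (q i * xs i + q i * ys i) / 2 := by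
      intro i _; simp only [hm]; ring
    rw [Finset.sum_congr rfl h1, ← Finset.sum_div, Finset.sum_add_distrib]
    have h2 : ∑ i, q i * xs i = 1 := hwx
    have h3 : ∑ i, q i * ys i = 1 := hwy
    rw [h2, h3]; norm_num
  have hmx : m ≠ xs := by
    intro he
    apply hne
    funext i
    have := congrFun he i
    simp only [hm] at this
    linarith
  have hmy : m ≠ ys := by
    intro he
    apply hne
    funext i
    have := congrFun he i
    simp only [hm] at this
    linarith
  have hxsm : PStrict (R h) xs m := demand_strict hpref hconv hdx ⟨hmnn, le_of_eq hqm⟩ hmx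
  have hysm : PStrict (R' h) ys m := demand_strict hpref' hconv' hdy ⟨hmnn, le_of_eq hqm⟩ hmy
  -- separation
  set U : Set (Fin L → ℝ) := {z | nneg z ∧ R h z m} with hU
  have hUconv : Convex ℝ U := upper_convex hpref hconv
  have hUclosed : IsClosed U := by
    have h1 : IsClosed {z : Fin L → ℝ | nneg z} := by
      have : {z : Fin L → ℝ | nneg z} = Set.univ.pi (fun _ => Set.Ici (0:ℝ)) := by
        ext z
        simp only [Set.mem_setOf_eq, Set.mem_univ_pi, Set.mem_Ici]
        exact Iff.rfl
      rw [this]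
      exact isClosed_set_pi (fun a _ => isClosed_Ici)
    have h2 : U = {z : Fin L → ℝ | nneg z} ∩ {z | R h z m} := rfl
    rw [h2]
    exact h1.inter (hcont m).1
  set S : Set (Fin L → ℝ) := Set.univ.pi (fun i => Set.Iio (m i)) with hS
  have hSopen : IsOpen S := isOpen_set_pi Set.finite_univ (fun i _ => isOpen_Iio)
  have hSconv : Convex ℝ S := convex_pi (fun i _ => convex_Iio (m i))
  have hdisj : Disjoint S U := by
    rw [Set.disjoint_left]
    intro zz hzS hzU
    have hz : ∀ i, zz i < m i := fun i => hzS i (Set.mem_univ i)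
    have hmw := (monoWeak_of_monoStrong hL hmono) m zz hzU.1 hz
    exact hmw.2 hzU.2
  obtain ⟨φ, c, hφS, hφU⟩ := geometric_hahn_banach_open hSconv hSopen hUconv hdisj
  have hmU : m ∈ U := ⟨hmnn, (hpref.1 m m hmnn hmnn).elim id id⟩
  set φc : Fin L → ℝ := fun i => φ (Pi.single i 1) with hφc
  have hrep : ∀ z : Fin L → ℝ, φ z = ∑ i, z i * φc i := by
    intro z
    have h1 : z = ∑ i, Pi.single i (z i) := (Finset.univ_sum_single z).symm
    calc φ z = φ (∑ i, Pi.single i (z i)) := by rw [← h1]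
      _ = ∑ i, φ (Pi.single i (z i)) := map_sum φ _ _
      _ = ∑ i, z i * φc i := by
          apply Finset.sum_congr rfl
          intro i _
          have h2 : Pi.single i (z i) = z i • (Pi.single i (1:ℝ) : Fin L → ℝ) := by
            funext j
            by_cases hj : j = i
            · subst hj; simp
            · simp [Pi.single_eq_of_ne hj]
          rw [h2, map_smul, smul_eq_mul, hφc]
  have hφnn : ∀ i, 0 ≤ φc i := by
    intro i
    by_contra hneg
    push_neg at hneg
    have hcm : c ≤ φ m := hφU m hmU
    set T : ℝ := (φ m - c + 1) / (-φc i) with hT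
    have hTpos : 0 < T := div_pos (by linarith) (by linarith)
    set ei : Fin L → ℝ := Pi.single i (1:ℝ) with hei
    have heinn : ∀ j, 0 ≤ ei j := by
      intro j
      by_cases hj : j = i
      · subst hj; simp [hei]
      · simp [hei, Pi.single_eq_of_ne hj]
    have hmem : (m + T • ei) ∈ U := by
      refine ⟨fun j => ?_, ?_⟩
      · have h1 := hmnn j
        have h2 : (0:ℝ) ≤ (T • ei) j := by
          simp only [Pi.smul_apply, smul_eq_mul]
          exact mul_nonneg hTpos.le (heinn j)
        simp only [Pi.add_apply]; linarith
      · have hge : ∀ j, m j ≤ (m + T • ei) j := by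
          intro j
          have h2 : (0:ℝ) ≤ (T • ei) j := by
            simp only [Pi.smul_apply, smul_eq_mul]
            exact mul_nonneg hTpos.le (heinn j)
          simp only [Pi.add_apply]; linarith
        have hneq : m + T • ei ≠ m := by
          intro heq
          have h3 := congrFun heq i
          simp only [Pi.add_apply, Pi.smul_apply, smul_eq_mul, hei, Pi.single_eq_same,
            mul_one] at h3
          linarith
        exact (hmono _ m hmnn hge hneq).1
    have h2 := hφU _ hmem
    rw [map_add, map_smul, smul_eq_mul] at h2
    have h3 : T * φ ei = -(φ m - c + 1) := by
      have h4 : φ ei = φc i := by rw [hei, hφc]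
      rw [h4, hT]
      field_simp
      rw [mul_div_cancel_right₀ _ (ne_of_lt hneg)]
    rw [h3] at h2
    linarith
  have hφmc : φ m = c := by
    have hle : c ≤ φ m := hφU m hmU
    rcases eq_or_lt_of_le hle with he | hgt
    · exact he.symm
    exfalso
    set one : Fin L → ℝ := fun _ => 1 with hone
    have honele : ∀ δ : ℝ, 0 < δ → φ (m - δ • one) < c := by
      intro δ hδ
      apply hφS
      intro i _
      simp only [hone, Pi.sub_apply, Pi.smul_apply, smul_eq_mul, mul_one, Set.mem_Iio]
      linarith
    rcases le_or_gt (φ one) 0 with hneg | hpos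
    · have h1 := honele 1 one_pos
      rw [map_sub, map_smul, smul_eq_mul, one_mul] at h1
      linarith
    · set δ := (φ m - c) / (2 * φ one) with hδ
      have hδpos : 0 < δ := div_pos (by linarith) (by linarith)
      have h1 := honele δ hδpos
      rw [map_sub, map_smul, smul_eq_mul] at h1
      have h2 : δ * φ one = (φ m - c) / 2 := by
        rw [hδ]
        field_simp
      linarith
  have hc0 : 0 ≤ c := by
    rw [← hφmc, hrep]
    exact Finset.sum_nonneg fun i _ => mul_nonneg (hmnn i) (hφnn i)
  have hφpos : ∃ k, 0 < φc k := by
    by_contra hno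
    push_neg at hno
    have hzero : ∀ i, φc i = 0 := fun i => le_antisymm (hno i) (hφnn i)
    have h1 : φ (fun i => m i - 1) < c := by
      apply hφS
      intro i _
      simp only [Set.mem_Iio]
      linarith
    rw [hrep] at h1
    simp only [hzero, mul_zero, Finset.sum_const_zero] at h1
    have h2 : c = 0 := by
      rw [← hφmc, hrep]
      simp [hzero]
    linarith
  obtain ⟨k, hk⟩ := hφpos
  -- the probe sequences
  set eps : ℕ → ℝ := fun n => 1 / ((n:ℝ) + 1) with heps
  have hepos : ∀ n, 0 < eps n := by intro n; positivity
  have heps0 : Tendsto eps atTop (𝓝 0) := tendsto_one_div_add_atTop_nhds_zero_nat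
  set qq : ℕ → Fin L → ℝ := fun n i => φc i + eps n with hqq
  have hqqpos : ∀ n, posv (qq n) := fun n i => add_pos_of_nonneg_of_pos (hφnn i) (hepos n)
  set Sm : ℝ := ∑ i, m i with hSm
  have hLne : Nonempty (Fin L) := ⟨⟨0, hL⟩⟩
  have hSmpos : 0 < Sm := Finset.sum_pos (fun i _ => hmpos i) univ_nonempty
  have hdotqq : ∀ (n : ℕ) (z : Fin L → ℝ), dot (qq n) z = φ z + eps n * ∑ i, z i := by
    intro n z
    rw [hrep]
    unfold dot
    rw [Finset.mul_sum, ← Finset.sum_add_distrib]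
    apply Finset.sum_congr rfl
    intro i _
    simp only [hqq]
    ring
  set w : ℕ → ℝ := fun n => dot (qq n) m with hwdef
  have hw : ∀ n, w n = c + eps n * Sm := fun n => by
    rw [hwdef]; simp only []; rw [hdotqq, hφmc, hSm]
  have hwpos : ∀ n, 0 < w n := fun n => by
    rw [hw]
    have := hepos n
    nlinarith
  set pr : ℕ → Fin L → ℝ := fun n j => qq n j / w n with hpr
  have hprpos : ∀ n, posv (pr n) := fun n j => div_pos (hqqpos n j) (hwpos n)
  set z : ℕ → Fin L → ℝ := fun n => f h (pr n) with hz
  have hdz : ∀ n, IsDemand (R h) (pr n) (z n) := fun n => hdem h _ (hprpos n)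
  have hmbud : ∀ n, Budget (pr n) m := by
    intro n
    refine ⟨hmnn, ?_⟩
    rw [hpr]
    rw [dot_div_left]
    have hww : dot (qq n) m = w n := rfl
    rw [hww, div_self (ne_of_gt (hwpos n))]
  have hzU : ∀ n, z n ∈ U := fun n => ⟨(hdz n).1.1, (hdz n).2 m (hmbud n)⟩
  have hzw : ∀ n, dot (qq n) (z n) = w n := by
    intro n
    have h1 := demand_dot_eq_one hL hmono (hprpos n) (hdz n)
    rw [hpr, dot_div_left, div_eq_one_iff_eq (ne_of_gt (hwpos n))] at h1
    exact h1
  have hzsum : ∀ n, ∑ i, z n i ≤ Sm := by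
    intro n
    have h1 : c ≤ φ (z n) := hφU _ (hzU n)
    have h2 := hzw n
    rw [hdotqq, hw] at h2
    nlinarith [hepos n]
  have hzbound : ∀ n, z n ∈ Set.univ.pi (fun _ : Fin L => Set.Icc (0:ℝ) Sm) := by
    intro n
    intro i _
    refine ⟨(hdz n).1.1 i, ?_⟩
    calc z n i ≤ ∑ j, z n j :=
          Finset.single_le_sum (fun j _ => (hdz n).1.1 j) (Finset.mem_univ i)
      _ ≤ Sm := hzsum n
  have hK : IsCompact (Set.univ.pi (fun _ : Fin L => Set.Icc (0:ℝ) Sm)) :=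
    isCompact_univ_pi (fun _ => isCompact_Icc)
  obtain ⟨zs, _, ψ, hψ, hψt⟩ := hK.tendsto_subseq hzbound
  have hψat : Tendsto ψ atTop atTop := hψ.tendsto_atTop
  have hepsψ : Tendsto (fun k => eps (ψ k)) atTop (𝓝 0) := heps0.comp hψat
  have hzsU : zs ∈ U := hUclosed.mem_of_tendsto hψt (Eventually.of_forall fun k => hzU (ψ k))
  have hwψ : Tendsto (fun k => w (ψ k)) atTop (𝓝 c) := by
    have h1 : Tendsto (fun k => c + eps (ψ k) * Sm) atTop (𝓝 (c + 0 * Sm)) :=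
      tendsto_const_nhds.add (hepsψ.mul_const Sm)
    rw [zero_mul, add_zero] at h1
    exact h1.congr fun k => (hw (ψ k)).symm
  have hφzs : φ zs = c := by
    have h1 : Tendsto (fun k => φ (z (ψ k))) atTop (𝓝 (φ zs)) :=
      (φ.continuous.tendsto zs).comp hψt
    have h2 : ∀ k, φ (z (ψ k)) = w (ψ k) - eps (ψ k) * ∑ i, z (ψ k) i := by
      intro k
      have h3 := hzw (ψ k)
      rw [hdotqq] at h3
      linarith
    have h4 : Tendsto (fun k => eps (ψ k) * ∑ i, z (ψ k) i) atTop (𝓝 0) := by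
      have hb : Tendsto (fun k => eps (ψ k) * Sm) atTop (𝓝 0) := by
        have hb1 := hepsψ.mul_const Sm
        rwa [zero_mul] at hb1
      apply squeeze_zero'
        (Eventually.of_forall fun k =>
          mul_nonneg (hepos (ψ k)).le
            (Finset.sum_nonneg fun i _ => (hdz (ψ k)).1.1 i))
        (Eventually.of_forall fun k =>
          mul_le_mul_of_nonneg_left (hzsum (ψ k)) (hepos (ψ k)).le)
        hb
    have h5 : Tendsto (fun k => w (ψ k) - eps (ψ k) * ∑ i, z (ψ k) i) atTop (𝓝 (c - 0)) :=
      hwψ.sub h4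
    rw [sub_zero] at h5
    have h6 : (fun k => φ (z (ψ k))) = fun k => w (ψ k) - eps (ψ k) * ∑ i, z (ψ k) i :=
      funext h2
    rw [h6] at h1
    exact tendsto_nhds_unique h1 h5
  -- the subsequential limit is m
  have hzsm : zs = m := by
    by_contra hnezs
    have hPm := hconv zs m hzsU.1 hmnn hzsU.2 hnezs (1/2) (by norm_num) (by norm_num)
    set mid : Fin L → ℝ := (1/2 : ℝ) • zs + (1 - (1/2:ℝ)) • m with hmid
    have hmidm : ∀ i, mid i = (zs i + m i) / 2 := by
      intro i
      simp only [hmid, Pi.add_apply, Pi.smul_apply, smul_eq_mul]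
      ring
    have hmidpos : ∀ i, 0 < mid i := by
      intro i
      rw [hmidm]
      have h7 := hzsU.1 i; have h8 := hmpos i
      linarith
    have hOopen : IsOpen {y : Fin L → ℝ | ¬ R h m y} := by
      have he : {y : Fin L → ℝ | ¬ R h m y} = {y | R h m y}ᶜ := rfl
      rw [he, isOpen_compl_iff]
      exact (hcont m).2
    have hmidO : mid ∈ {y : Fin L → ℝ | ¬ R h m y} := hPm.2
    obtain ⟨δ0, hδ0, hball⟩ := Metric.isOpen_iff.1 hOopen mid hmidO
    set δ := min (δ0/2) (mid k) with hδdef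
    have hδpos : 0 < δ := lt_min (by linarith) (hmidpos k)
    have hδle : δ ≤ δ0/2 := min_le_left _ _
    have hδle2 : δ ≤ mid k := min_le_right _ _
    set y : Fin L → ℝ := mid - δ • (Pi.single k (1:ℝ) : Fin L → ℝ) with hy
    have hyk : y k = mid k - δ := by
      simp [hy]
    have hyother : ∀ j, j ≠ k → y j = mid j := by
      intro j hj
      simp [hy, Pi.single_eq_of_ne hj]
    have hydist : dist y mid < δ0 := by
      rw [dist_pi_lt_iff hδ0]
      intro b
      by_cases hb : b = k
      · rw [hb]
        rw [hyk, Real.dist_eq]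
        have he2 : mid k - δ - mid k = -δ := by ring
        rw [he2, abs_neg, abs_of_pos hδpos]
        linarith
      · rw [hyother b hb, dist_self]
        exact hδ0
    have hyO : ¬ R h m y := hball (Metric.mem_ball.mpr hydist)
    have hynn : nneg y := by
      intro j
      by_cases hb : j = k
      · rw [hb, hyk]
        linarith
      · rw [hyother j hb]
        exact (hmidpos j).le
    have hyU : y ∈ U := by
      refine ⟨hynn, ?_⟩
      rcases hpref.1 y m hynn hmnn with h7 | h7
      · exact h7
      · exact absurd h7 hyO
    have h6 := hφU y hyU
    have hφmid : φ mid = c := by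
      rw [hmid, map_add, map_smul, map_smul, smul_eq_mul, smul_eq_mul, hφzs, hφmc]
      ring
    have hφy : φ y = c - δ * φc k := by
      rw [hy, map_sub, map_smul, smul_eq_mul, hφmid]
    rw [hφy] at h6
    nlinarith [hk, hδpos]
  rw [hzsm] at hψt
  -- eventual interiority of the h-consumer demand
  have hint : ∀ᶠ k2 in atTop, ∀ i, 0 < z (ψ k2) i := by
    rw [Filter.eventually_all]
    intro i
    have h1 : Tendsto (fun k2 => z (ψ k2) i) atTop (𝓝 (m i)) := tendsto_pi_nhds.1 hψt i
    exact h1.eventually (eventually_gt_nhds (hmpos i))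
  -- small incomes for everyone else
  set t : ℕ → ℝ := fun n => eps n * eps n with ht
  have htpos : ∀ n, 0 < t n := fun n => mul_pos (hepos n) (hepos n)
  set vv : ℕ → Fin H → ℝ := fun n => Function.update (fun _ => t n) h (w n) with hvv
  have hvvh : ∀ n, vv n h = w n := fun n => Function.update_self _ _ _
  have hvvg : ∀ n g, g ≠ h → vv n g = t n := fun n g hg => Function.update_of_ne hg _ _
  have hvvpos : ∀ n g, 0 < vv n g := by
    intro n g
    by_cases hg : g = h
    · subst hg; rw [hvvh]; exact hwpos n
    · rw [hvvg n g hg]; exact htpos n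
  have hvvposv : ∀ n g, posv (fun j => qq n j / vv n g) :=
    fun n g j => div_pos (hqqpos n j) (hvvpos n g)
  have hsmall : ∀ (n : ℕ) (x : Fin L → ℝ), Budget (fun j => qq n j / t n) x →
      ∀ i, x i ≤ eps n := by
    intro n x hb i
    have hince : eps n ≤ qq n i := by
      have h7 := hφnn i
      simp only [hqq]
      linarith
    have h1 : (qq n i / t n) * x i ≤ dot (fun j => qq n j / t n) x := by
      apply Finset.single_le_sum (f := fun j => (qq n j / t n) * x j)
        (fun j _ => mul_nonneg (div_pos (hqqpos n j) (htpos n)).le (hb.1 j))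
        (Finset.mem_univ i)
    have h2 : (qq n i / t n) * x i ≤ 1 := h1.trans hb.2
    have h3 : qq n i * x i ≤ t n := by
      have h4 := mul_le_mul_of_nonneg_right h2 (htpos n).le
      rw [one_mul] at h4
      have h5 : qq n i / t n * x i * t n = qq n i * x i := by
        rw [div_mul_eq_mul_div, div_mul_cancel₀ _ (htpos n).ne']
      rw [h5] at h4
      exact h4
    have h4 : x i ≤ t n / qq n i := by
      rw [le_div_iff₀ (hqqpos n i)]
      linarith [h3]
    have h5 : t n / qq n i ≤ t n / eps n := by
      have h6 : 1 / qq n i ≤ 1 / eps n := one_div_le_one_div_of_le (hepos n) hince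
      calc t n / qq n i = t n * (1 / qq n i) := by ring
        _ ≤ t n * (1 / eps n) := mul_le_mul_of_nonneg_left h6 (htpos n).le
        _ = t n / eps n := by ring
    have h6 : t n / eps n = eps n := by
      rw [ht]
      exact mul_div_cancel_right₀ _ (ne_of_gt (hepos n))
    linarith
  set z' : ℕ → Fin L → ℝ := fun n => f' h (pr n) with hz'
  have hdz' : ∀ n, IsDemand (R' h) (pr n) (z' n) := fun n => hdem' h _ (hprpos n)
  have hprvv : ∀ n, (fun j => qq n j / vv n h) = pr n := by
    intro n; funext j; rw [hvvh]
  -- aggregate equality eventually along the subsequence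
  have hagg : ∀ᶠ k2 in atTop, ∀ i,
      ∑ g, f g (fun j => qq (ψ k2) j / vv (ψ k2) g) i
        = ∑ g, f' g (fun j => qq (ψ k2) j / vv (ψ k2) g) i := by
    filter_upwards [hint] with k2 hk2
    apply hP (qq (ψ k2)) (vv (ψ k2)) (hqqpos _) (hvvpos _)
    intro i
    have hterm : f h (fun j => qq (ψ k2) j / vv (ψ k2) h) i = z (ψ k2) i := by
      rw [hprvv]
    calc (0:ℝ) < z (ψ k2) i := hk2 i
      _ = f h (fun j => qq (ψ k2) j / vv (ψ k2) h) i := hterm.symm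
      _ ≤ ∑ g, f g (fun j => qq (ψ k2) j / vv (ψ k2) g) i := by
          apply Finset.single_le_sum
            (f := fun g => f g (fun j => qq (ψ k2) j / vv (ψ k2) g) i)
            (fun g _ => (hdem g _ (hvvposv _ g)).1.1 i) (Finset.mem_univ h)
  have hdiffbound : ∀ᶠ k2 in atTop, ∀ i,
      |z' (ψ k2) i - z (ψ k2) i| ≤ 2 * H * eps (ψ k2) := by
    filter_upwards [hagg] with k2 hk2
    intro i
    have hsum := hk2 i
    rw [← Finset.add_sum_erase _ _ (Finset.mem_univ h),
      ← Finset.add_sum_erase _ (fun g => f' g (fun j => qq (ψ k2) j / vv (ψ k2) g) i)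
        (Finset.mem_univ h)] at hsum
    have hFh : f h (fun j => qq (ψ k2) j / vv (ψ k2) h) i = z (ψ k2) i := by rw [hprvv]
    have hFh' : f' h (fun j => qq (ψ k2) j / vv (ψ k2) h) i = z' (ψ k2) i := by rw [hprvv]
    rw [hFh, hFh'] at hsum
    have hbF : ∀ g ∈ Finset.univ.erase h,
        0 ≤ f g (fun j => qq (ψ k2) j / vv (ψ k2) g) i ∧
          f g (fun j => qq (ψ k2) j / vv (ψ k2) g) i ≤ eps (ψ k2) := by
      intro g hg
      have hgne := Finset.ne_of_mem_erase hg
      have harg2 : (fun j => qq (ψ k2) j / vv (ψ k2) g) = fun j => qq (ψ k2) j / t (ψ k2) := by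
        funext j; rw [hvvg _ _ hgne]
      refine ⟨(hdem g _ (hvvposv (ψ k2) g)).1.1 i, ?_⟩
      have hbud := (hdem g (fun j => qq (ψ k2) j / vv (ψ k2) g) (hvvposv (ψ k2) g)).1
      rw [harg2] at hbud ⊢
      exact hsmall _ _ hbud i
    have hbF' : ∀ g ∈ Finset.univ.erase h,
        0 ≤ f' g (fun j => qq (ψ k2) j / vv (ψ k2) g) i ∧
          f' g (fun j => qq (ψ k2) j / vv (ψ k2) g) i ≤ eps (ψ k2) := by
      intro g hg
      have hgne := Finset.ne_of_mem_erase hg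
      have harg2 : (fun j => qq (ψ k2) j / vv (ψ k2) g) = fun j => qq (ψ k2) j / t (ψ k2) := by
        funext j; rw [hvvg _ _ hgne]
      refine ⟨(hdem' g _ (hvvposv (ψ k2) g)).1.1 i, ?_⟩
      have hbud := (hdem' g (fun j => qq (ψ k2) j / vv (ψ k2) g) (hvvposv (ψ k2) g)).1
      rw [harg2] at hbud ⊢
      exact hsmall _ _ hbud i
    have hcard : ((Finset.univ.erase h).card : ℝ) ≤ (H : ℝ) := by
      have h7 : (Finset.univ.erase h).card ≤ Finset.univ.card :=
        Finset.card_le_card (Finset.erase_subset _ _)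
      have h8 : (Finset.univ : Finset (Fin H)).card = H := Finset.card_fin H
      exact_mod_cast h7.trans_eq h8
    have hS1 : 0 ≤ ∑ g ∈ Finset.univ.erase h, f g (fun j => qq (ψ k2) j / vv (ψ k2) g) i :=
      Finset.sum_nonneg fun g hg => (hbF g hg).1
    have hS2 : ∑ g ∈ Finset.univ.erase h, f g (fun j => qq (ψ k2) j / vv (ψ k2) g) i
        ≤ (H : ℝ) * eps (ψ k2) := by
      calc ∑ g ∈ Finset.univ.erase h, f g (fun j => qq (ψ k2) j / vv (ψ k2) g) i
          ≤ ∑ _g ∈ Finset.univ.erase h, eps (ψ k2) :=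
            Finset.sum_le_sum fun g hg => (hbF g hg).2
        _ = ((Finset.univ.erase h).card : ℝ) * eps (ψ k2) := by
            rw [Finset.sum_const, nsmul_eq_mul]
        _ ≤ (H : ℝ) * eps (ψ k2) :=
            mul_le_mul_of_nonneg_right hcard (hepos (ψ k2)).le
    have hS1' : 0 ≤ ∑ g ∈ Finset.univ.erase h, f' g (fun j => qq (ψ k2) j / vv (ψ k2) g) i :=
      Finset.sum_nonneg fun g hg => (hbF' g hg).1
    have hS2' : ∑ g ∈ Finset.univ.erase h, f' g (fun j => qq (ψ k2) j / vv (ψ k2) g) i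
        ≤ (H : ℝ) * eps (ψ k2) := by
      calc ∑ g ∈ Finset.univ.erase h, f' g (fun j => qq (ψ k2) j / vv (ψ k2) g) i
          ≤ ∑ _g ∈ Finset.univ.erase h, eps (ψ k2) :=
            Finset.sum_le_sum fun g hg => (hbF' g hg).2
        _ = ((Finset.univ.erase h).card : ℝ) * eps (ψ k2) := by
            rw [Finset.sum_const, nsmul_eq_mul]
        _ ≤ (H : ℝ) * eps (ψ k2) :=
            mul_le_mul_of_nonneg_right hcard (hepos (ψ k2)).le
    rw [abs_le]
    constructor <;> linarith
  have hz't : Tendsto (fun k2 => z' (ψ k2)) atTop (𝓝 m) := by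
    rw [tendsto_pi_nhds]
    intro i
    have h1 : Tendsto (fun k2 => z (ψ k2) i) atTop (𝓝 (m i)) := tendsto_pi_nhds.1 hψt i
    have h2 : Tendsto (fun k2 => z' (ψ k2) i - z (ψ k2) i) atTop (𝓝 0) := by
      have hg0 : Tendsto (fun k2 => 2 * (H:ℝ) * eps (ψ k2)) atTop (𝓝 0) := by
        have h3 := hepsψ.const_mul (2 * (H:ℝ))
        rwa [mul_zero] at h3
      refine squeeze_zero_norm' ?_ hg0
      filter_upwards [hdiffbound] with k2 hk2
      simpa [Real.norm_eq_abs] using hk2 i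
    have h3 := h1.add h2
    rw [add_zero] at h3
    exact h3.congr (fun k2 => by ring)
  -- dichotomy and the final contradiction
  have hdich : ∀ n, dot (qq n) xs + dot (qq n) ys = 2 * w n := by
    intro n
    have h1 : dot (qq n) xs + dot (qq n) ys = ∑ i, (qq n i * xs i + qq n i * ys i) := by
      unfold dot; rw [Finset.sum_add_distrib]
    have h2 : ∀ i ∈ Finset.univ, qq n i * xs i + qq n i * ys i = 2 * (qq n i * m i) := by
      intro i _
      simp only [hm]
      ring
    rw [h1, Finset.sum_congr rfl h2, ← Finset.mul_sum]
    have h3 : ∑ i, qq n i * m i = w n := rfl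
    rw [h3]
  by_cases hfreq : ∃ᶠ k2 in atTop, dot (qq (ψ k2)) ys ≤ w (ψ k2)
  · have hmemf : ∃ᶠ k2 in atTop, z' (ψ k2) ∈ {u | R' h u ys} := by
      apply hfreq.mono
      intro k2 hk2
      have hbud : Budget (pr (ψ k2)) ys := by
        refine ⟨hdy.1.1, ?_⟩
        rw [hpr, dot_div_left]
        exact (div_le_one (hwpos _)).mpr hk2
      exact (hdz' (ψ k2)).2 ys hbud
    have hmem := mem_closure_of_frequently_of_tendsto hmemf hz't
    rw [((hcont' ys).1).closure_eq] at hmem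
    exact hysm.2 hmem
  · rw [not_frequently] at hfreq
    have hev : ∀ᶠ k2 in atTop, dot (qq (ψ k2)) xs ≤ w (ψ k2) := by
      filter_upwards [hfreq] with k2 hk2
      have h7 := not_le.mp hk2
      have h8 := hdich (ψ k2)
      linarith
    have hmemf : ∃ᶠ k2 in atTop, z (ψ k2) ∈ {u | R h u xs} := by
      apply hev.frequently.mono
      intro k2 hk2
      have hbud : Budget (pr (ψ k2)) xs := by
        refine ⟨hdx.1.1, ?_⟩
        rw [hpr, dot_div_left]
        exact (div_le_one (hwpos _)).mpr hk2
      exact (hdz (ψ k2)).2 xs hbud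
    have hmem := mem_closure_of_frequently_of_tendsto hmemf hψt
    rw [((hcont xs).1).closure_eq] at hmem
    exact hxsm.2 hmem

end Helpers5
section Helpers6

open Filter Topology

variable {L H : ℕ}

lemma demand_tendsto (hL : 0 < L) {R : Pref L} (hreg : Regular R)
    {p : Fin L → ℝ} {pseq xseq : ℕ → Fin L → ℝ} {xp : Fin L → ℝ}
    (hp : posv p) (hpn : ∀ n, posv (pseq n))
    (hdn : ∀ n, IsDemand R (pseq n) (xseq n)) (hdp : IsDemand R p xp)
    (hpt : Tendsto pseq atTop (𝓝 p))
    (hlb : ∃ c : ℝ, 0 < c ∧ ∀ n j, c ≤ pseq n j) :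
    Tendsto xseq atTop (𝓝 xp) := by
  obtain ⟨c, hc, hcb⟩ := hlb
  have hbound : ∀ n, xseq n ∈ Set.univ.pi (fun _ : Fin L => Set.Icc (0:ℝ) (1/c)) := by
    intro n j _
    refine ⟨(hdn n).1.1 j, ?_⟩
    have h1 : pseq n j * xseq n j ≤ dot (pseq n) (xseq n) := by
      apply Finset.single_le_sum (f := fun j2 => pseq n j2 * xseq n j2)
        (fun j2 _ => mul_nonneg (hpn n j2).le ((hdn n).1.1 j2)) (Finset.mem_univ j)
    have h2 : pseq n j * xseq n j ≤ 1 := h1.trans (hdn n).1.2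
    rw [le_div_iff₀ hc]
    calc xseq n j * c ≤ xseq n j * pseq n j :=
          mul_le_mul_of_nonneg_left (hcb n j) ((hdn n).1.1 j)
      _ ≤ 1 := by rw [mul_comm]; exact h2
  have hK : IsCompact (Set.univ.pi (fun _ : Fin L => Set.Icc (0:ℝ) (1/c))) :=
    isCompact_univ_pi (fun _ => isCompact_Icc)
  apply Filter.tendsto_of_subseq_tendsto
  intro ns hns
  obtain ⟨a, _, ms, hms, hmst⟩ := hK.tendsto_subseq (fun n => hbound (ns n))
  refine ⟨ms, ?_⟩
  have hpt2 : Tendsto (fun n => pseq (ns (ms n))) atTop (𝓝 p) :=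
    hpt.comp (hns.comp hms.tendsto_atTop)
  have hda : IsDemand R p a :=
    demand_of_tendsto hL hreg hp (fun n => hpn (ns (ms n))) (fun n => hdn (ns (ms n)))
      hpt2 hmst
  have : a = xp := demand_unique hreg.1 hreg.2.2.2 hda hdp
  rwa [this] at hmst

end Helpers6
section Helpers7

open Filter Topology

set_option maxHeartbeats 1000000

variable {L H : ℕ}

lemma main_eq (hL : 0 < L) (hH : 0 < H)
    {R R' : Fin H → Pref L} {f f' : Fin H → (Fin L → ℝ) → (Fin L → ℝ)}
    (hreg : ∀ h, Regular (R h)) (hreg' : ∀ h, Regular (R' h))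
    (hdem : ∀ h q, posv q → IsDemand (R h) q (f h q))
    (hdem' : ∀ h q, posv q → IsDemand (R' h) q (f' h q))
    (hP : ∀ (q : Fin L → ℝ) (v : Fin H → ℝ), posv q → (∀ g, 0 < v g) →
        (∀ i, 0 < ∑ g, f g (fun j => q j / v g) i) →
        ∀ i, ∑ g, f g (fun j => q j / v g) i = ∑ g, f' g (fun j => q j / v g) i)
    (h : Fin H) :
    ∀ (k : ℕ) (q : Fin L → ℝ), posv q →
      (Finset.univ.filter (fun i => f h q i = 0 ∧ f' h q i = 0)).card ≤ k →
      f h q = f' h q := by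
  classical
  intro k
  induction k with
  | zero =>
    intro q hq hcard
    by_contra hne
    apply probe_base hL hH hreg hreg' hdem hdem' hP h hq ?_ hne
    intro i
    by_contra hboth
    push_neg at hboth
    have hi : i ∈ Finset.univ.filter (fun i => f h q i = 0 ∧ f' h q i = 0) := by
      simp only [Finset.mem_filter, Finset.mem_univ, true_and]
      exact hboth
    have hemp : Finset.univ.filter (fun i => f h q i = 0 ∧ f' h q i = 0) = ∅ :=
      Finset.card_eq_zero.mp (le_antisymm hcard (Nat.zero_le _))
    rw [hemp] at hi
    exact absurd hi (Finset.notMem_empty i)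
  | succ k ih =>
    intro q hq hcard
    by_contra hne
    set CZ := Finset.univ.filter (fun i => f h q i = 0 ∧ f' h q i = 0) with hCZ
    by_cases hcz : CZ = ∅
    · apply probe_base hL hH hreg hreg' hdem hdem' hP h hq ?_ hne
      intro i
      by_contra hboth
      push_neg at hboth
      have hi : i ∈ CZ := by
        simp only [hCZ, Finset.mem_filter, Finset.mem_univ, true_and]
        exact hboth
      rw [hcz] at hi
      exact absurd hi (Finset.notMem_empty i)
    · obtain ⟨i, hiCZ⟩ := Finset.nonempty_iff_ne_empty.mpr hcz
      have hizero : f h q i = 0 ∧ f' h q i = 0 := (Finset.mem_filter.mp hiCZ).2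
      have hregh := hreg h
      have hregh' := hreg' h
      set xs := f h q with hxs
      set ys := f' h q with hys
      -- upward positivity of updates
      have hup : ∀ σ : ℝ, 0 < σ → posv (Function.update q i σ) := by
        intro σ hσ j
        by_cases hj : j = i
        · rw [hj, Function.update_self]; exact hσ
        · rw [Function.update_of_ne hj]; exact hq j
      set I : Set ℝ := {s : ℝ | 0 < s ∧ s ≤ q i ∧ ∀ σ, s ≤ σ → σ ≤ q i →
        (f h (Function.update q i σ) = xs ∧ f' h (Function.update q i σ) = ys)} with hI
      have hqiI : q i ∈ I := by
        refine ⟨hq i, le_rfl, ?_⟩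
        intro σ h1 h2
        have hσ : σ = q i := le_antisymm h2 h1
        rw [hσ, Function.update_eq_self]
        exact ⟨rfl, rfl⟩
      have hIne : I.Nonempty := ⟨q i, hqiI⟩
      have hIbdd : BddBelow I := ⟨0, fun s hs => hs.1.le⟩
      set sstar := sInf I with hsstar
      have hsle : sstar ≤ q i := csInf_le hIbdd hqiI
      have hs0 : 0 ≤ sstar := le_csInf hIne (fun s hs => hs.1.le)
      have hmemI : ∀ σ, sstar < σ → σ ≤ q i →
          f h (Function.update q i σ) = xs ∧ f' h (Function.update q i σ) = ys := by
        intro σ hσ1 hσ2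
        obtain ⟨s, hsI, hslt⟩ := (csInf_lt_iff hIbdd hIne).mp hσ1
        exact hsI.2.2 σ hslt.le hσ2
      have hspos : 0 < sstar := by
        rcases lt_or_eq_of_le hs0 with h1 | h1
        · exact h1
        exfalso
        have hallσ : ∀ σ, 0 < σ → σ ≤ q i → IsDemand (R h) (Function.update q i σ) xs := by
          intro σ hσ1 hσ2
          rcases lt_or_eq_of_le hσ2 with h3 | h3
          · have h2 : sstar < σ := by rw [← h1]; exact hσ1
            have h4 := (hmemI σ h2 hσ2).1
            rw [← h4]
            exact hdem h _ (hup σ hσ1)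
          · rw [h3, Function.update_eq_self]
            exact hdem h q hq
        exact no_global_zero hL hregh hq hizero.1 hallσ
      -- the demands at sstar are still xs and ys
      have hAt : f h (Function.update q i sstar) = xs ∧
          f' h (Function.update q i sstar) = ys := by
        rcases eq_or_lt_of_le hsle with he | hlt
        · rw [he, Function.update_eq_self]
          exact ⟨rfl, rfl⟩
        · set σseq : ℕ → ℝ := fun n => sstar + (q i - sstar) / ((n:ℝ) + 2) with hσseq
          have hσin : ∀ n : ℕ, sstar < σseq n ∧ σseq n ≤ q i := by
            intro n
            have h2 : (0:ℝ) < (q i - sstar) / ((n:ℝ)+2) :=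
              div_pos (by linarith) (by positivity)
            constructor
            · simp only [hσseq]; linarith
            · have h3 : (q i - sstar)/((n:ℝ)+2) ≤ (q i - sstar) := by
                rw [div_le_iff₀ (by positivity : (0:ℝ) < (n:ℝ)+2)]
                nlinarith
              simp only [hσseq]; linarith
          have hσtend : Tendsto σseq atTop (𝓝 sstar) := by
            have h2 : Tendsto (fun n : ℕ => (q i - sstar) * (1/((n:ℝ)+2))) atTop (𝓝 0) := by
              have h3 : Tendsto (fun n : ℕ => (1:ℝ)/((n:ℝ)+2)) atTop (𝓝 0) := by
                have h4 := (tendsto_one_div_add_atTop_nhds_zero_nat (𝕜 := ℝ)).comp (tendsto_add_atTop_nat 1)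
                have h5 : ((fun n : ℕ => 1/((n:ℝ)+1)) ∘ (fun n : ℕ => n + 1))
                    = fun n : ℕ => (1:ℝ)/((n:ℝ)+2) := by
                  funext n
                  simp only [Function.comp_apply]
                  push_cast
                  ring_nf
                rwa [h5] at h4
              have h6 := h3.const_mul (q i - sstar)
              rwa [mul_zero] at h6
            have h7 := (tendsto_const_nhds (x := sstar) (f := atTop (α := ℕ))).add h2
            rw [add_zero] at h7
            apply h7.congr
            intro n
            simp only [hσseq]
            ring
          have hptend : Tendsto (fun n => Function.update q i (σseq n)) atTop
              (𝓝 (Function.update q i sstar)) := by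
            rw [tendsto_pi_nhds]
            intro j
            by_cases hj : j = i
            · subst hj
              simp only [Function.update_self]
              exact hσtend
            · simp only [Function.update_of_ne hj]
              exact tendsto_const_nhds
          have hposσ : ∀ n, 0 < σseq n := fun n => lt_trans hspos (hσin n).1
          constructor
          · have hd : ∀ n, IsDemand (R h) (Function.update q i (σseq n)) xs := by
              intro n
              have h2 := (hmemI _ (hσin n).1 (hσin n).2).1
              rw [← h2]
              exact hdem h _ (hup _ (hposσ n))
            have h3 : IsDemand (R h) (Function.update q i sstar) xs :=
              demand_of_tendsto hL hregh (hup _ hspos) (fun n => hup _ (hposσ n)) hd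
                hptend tendsto_const_nhds
            exact demand_unique hregh.1 hregh.2.2.2 (hdem h _ (hup _ hspos)) h3
          · have hd : ∀ n, IsDemand (R' h) (Function.update q i (σseq n)) ys := by
              intro n
              have h2 := (hmemI _ (hσin n).1 (hσin n).2).2
              rw [← h2]
              exact hdem' h _ (hup _ (hposσ n))
            have h3 : IsDemand (R' h) (Function.update q i sstar) ys :=
              demand_of_tendsto hL hregh' (hup _ hspos) (fun n => hup _ (hposσ n)) hd
                hptend tendsto_const_nhds
            exact demand_unique hregh'.1 hregh'.2.2.2 (hdem' h _ (hup _ hspos)) h3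
      -- escape points just below sstar
      have hescape : ∀ n : ℕ, ∃ σ, sstar * (1 - 1/((n:ℝ)+2)) ≤ σ ∧ σ < sstar ∧
          (f h (Function.update q i σ) ≠ xs ∨ f' h (Function.update q i σ) ≠ ys) := by
        intro n
        have hfrac : (0:ℝ) < 1/((n:ℝ)+2) := by positivity
        have hfrac2 : 1/((n:ℝ)+2) < 1 := by
          rw [div_lt_one (by positivity : (0:ℝ) < (n:ℝ)+2)]
          linarith [Nat.cast_nonneg (α := ℝ) n]
        set τ := sstar * (1 - 1/((n:ℝ)+2)) with hτ
        have hτpos : 0 < τ := mul_pos hspos (by linarith)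
        have hτlt : τ < sstar := by
          rw [hτ]
          nlinarith
        have hτnotI : τ ∉ I := notMem_of_lt_csInf hτlt hIbdd
        by_contra hcon
        push_neg at hcon
        apply hτnotI
        refine ⟨hτpos, le_trans hτlt.le hsle, ?_⟩
        intro σ h1 h2
        rcases lt_or_ge σ sstar with h3 | h3
        · exact hcon σ h1 h3
        · rcases eq_or_lt_of_le h3 with h4 | h4
          · rw [← h4]
            exact hAt
          · exact hmemI σ h4 h2
      choose σs hσ1 hσ2 hσ3 using hescape
      have hσpos : ∀ n, 0 < σs n := by
        intro n
        have hfrac2 : 1/((n:ℝ)+2) < 1 := by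
          rw [div_lt_one (by positivity : (0:ℝ) < (n:ℝ)+2)]
          linarith [Nat.cast_nonneg (α := ℝ) n]
        have h2 : 0 < sstar * (1 - 1/((n:ℝ)+2)) := mul_pos hspos (by linarith)
        linarith [hσ1 n]
      have hσtend : Tendsto σs atTop (𝓝 sstar) := by
        have hlow : Tendsto (fun n : ℕ => sstar * (1 - 1/((n:ℝ)+2))) atTop (𝓝 sstar) := by
          have h3 : Tendsto (fun n : ℕ => (1:ℝ)/((n:ℝ)+2)) atTop (𝓝 0) := by
            have h4 := (tendsto_one_div_add_atTop_nhds_zero_nat (𝕜 := ℝ)).comp (tendsto_add_atTop_nat 1)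
            have h5 : ((fun n : ℕ => 1/((n:ℝ)+1)) ∘ (fun n : ℕ => n + 1))
                = fun n : ℕ => (1:ℝ)/((n:ℝ)+2) := by
              funext n
              simp only [Function.comp_apply]
              push_cast
              ring_nf
            rwa [h5] at h4
          have h6 : Tendsto (fun n : ℕ => sstar * (1 - 1/((n:ℝ)+2))) atTop
              (𝓝 (sstar * (1 - 0))) :=
            (tendsto_const_nhds.sub h3).const_mul sstar
          rwa [sub_zero, mul_one] at h6
        exact tendsto_of_tendsto_of_tendsto_of_le_of_le hlow tendsto_const_nhds
          (fun n => hσ1 n) (fun n => (hσ2 n).le)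
      have hptend : Tendsto (fun n => Function.update q i (σs n)) atTop
          (𝓝 (Function.update q i sstar)) := by
        rw [tendsto_pi_nhds]
        intro j
        by_cases hj : j = i
        · subst hj
          simp only [Function.update_self]
          exact hσtend
        · simp only [Function.update_of_ne hj]
          exact tendsto_const_nhds
      -- uniform positive lower bound on the price sequence
      have hLne : Nonempty (Fin L) := ⟨⟨0, hL⟩⟩
      set cmin : ℝ := min (sstar/2) (Finset.univ.inf' Finset.univ_nonempty q) with hcmin
      have hqinf : 0 < Finset.univ.inf' Finset.univ_nonempty q := by
        rw [Finset.lt_inf'_iff]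
        intro j _
        exact hq j
      have hcminpos : 0 < cmin := lt_min (by linarith) hqinf
      have hlb : ∀ᶠ n in atTop, ∀ j, cmin ≤ Function.update q i (σs n) j := by
        have hev : ∀ᶠ n in atTop, sstar/2 < σs n := hσtend.eventually (eventually_gt_nhds (by linarith))
        filter_upwards [hev] with n hn j
        by_cases hj : j = i
        · rw [hj, Function.update_self]
          calc cmin ≤ sstar/2 := min_le_left _ _
            _ ≤ σs n := hn.le
        · rw [Function.update_of_ne hj]
          calc cmin ≤ Finset.univ.inf' Finset.univ_nonempty q := min_le_right _ _
            _ ≤ q j := Finset.inf'_le q (Finset.mem_univ j)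
      -- extract an index set where the bound holds, to apply demand_tendsto
      obtain ⟨N0, hN0⟩ := eventually_atTop.mp hlb
      set pseq : ℕ → Fin L → ℝ := fun n => Function.update q i (σs (n + N0)) with hpseq
      have hpseqpos : ∀ n, posv (pseq n) := fun n => hup _ (hσpos (n + N0))
      have hpseqt : Tendsto pseq atTop (𝓝 (Function.update q i sstar)) :=
        hptend.comp (tendsto_add_atTop_nat N0)
      have hpseqlb : ∃ c : ℝ, 0 < c ∧ ∀ n j, c ≤ pseq n j :=
        ⟨cmin, hcminpos, fun n j => hN0 (n + N0) (Nat.le_add_left N0 n) j⟩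
      have hxt : Tendsto (fun n => f h (pseq n)) atTop (𝓝 xs) := by
        have hdp : IsDemand (R h) (Function.update q i sstar) xs := by
          rw [← hAt.1]
          exact hdem h _ (hup _ hspos)
        exact demand_tendsto hL hregh (hup _ hspos) hpseqpos
          (fun n => hdem h _ (hpseqpos n)) hdp hpseqt hpseqlb
      have hyt : Tendsto (fun n => f' h (pseq n)) atTop (𝓝 ys) := by
        have hdp : IsDemand (R' h) (Function.update q i sstar) ys := by
          rw [← hAt.2]
          exact hdem' h _ (hup _ hspos)
        exact demand_tendsto hL hregh' (hup _ hspos) hpseqpos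
          (fun n => hdem' h _ (hpseqpos n)) hdp hpseqt hpseqlb
      -- choose a good index
      obtain ⟨j0, hj0⟩ : ∃ j0, xs j0 ≠ ys j0 := by
        by_contra hno
        push_neg at hno
        exact hne (funext hno)
      have hevne : ∀ᶠ n in atTop, f h (pseq n) j0 ≠ f' h (pseq n) j0 := by
        rcases lt_or_gt_of_ne hj0 with hlt | hgt
        · have h1 := (tendsto_pi_nhds.1 hxt j0).eventually
            (eventually_lt_nhds (show xs j0 < (xs j0 + ys j0)/2 by linarith))
          have h2 := (tendsto_pi_nhds.1 hyt j0).eventually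
            (eventually_gt_nhds (show (xs j0 + ys j0)/2 < ys j0 by linarith))
          filter_upwards [h1, h2] with n hn1 hn2
          intro heq
          rw [heq] at hn1
          linarith
        · have h1 := (tendsto_pi_nhds.1 hxt j0).eventually
            (eventually_gt_nhds (show (xs j0 + ys j0)/2 < xs j0 by linarith))
          have h2 := (tendsto_pi_nhds.1 hyt j0).eventually
            (eventually_lt_nhds (show ys j0 < (xs j0 + ys j0)/2 by linarith))
          filter_upwards [h1, h2] with n hn1 hn2
          intro heq
          rw [heq] at hn1
          linarith
      have hevcov : ∀ᶠ n in atTop, ∀ j, j ∉ CZ →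
          (0 < f h (pseq n) j ∨ 0 < f' h (pseq n) j) := by
        rw [Filter.eventually_all]
        intro j
        by_cases hj : j ∈ CZ
        · exact Eventually.of_forall (fun n h2 => absurd hj h2)
        · have hj2 : ¬(xs j = 0 ∧ ys j = 0) := by
            intro hcontra
            apply hj
            simp only [hCZ, Finset.mem_filter, Finset.mem_univ, true_and]
            exact hcontra
          rcases Classical.em (xs j = 0) with hxz | hxz
          · have hyz : ys j ≠ 0 := fun h2 => hj2 ⟨hxz, h2⟩
            have hypos : 0 < ys j := lt_of_le_of_ne ((hdem' h q hq).1.1 j) (Ne.symm hyz)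
            have h1 := (tendsto_pi_nhds.1 hyt j).eventually (eventually_gt_nhds hypos)
            filter_upwards [h1] with n hn _
            exact Or.inr hn
          · have hxpos : 0 < xs j := lt_of_le_of_ne ((hdem h q hq).1.1 j) (Ne.symm hxz)
            have h1 := (tendsto_pi_nhds.1 hxt j).eventually (eventually_gt_nhds hxpos)
            filter_upwards [h1] with n hn _
            exact Or.inl hn
      -- positivity of good i at the escape prices
      have hipos : ∀ n, 0 < f h (pseq n) i ∨ 0 < f' h (pseq n) i := by
        intro n
        have hdsstarx : IsDemand (R h) (Function.update q i sstar) xs := by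
          rw [← hAt.1]
          exact hdem h _ (hup _ hspos)
        have hdsstary : IsDemand (R' h) (Function.update q i sstar) ys := by
          rw [← hAt.2]
          exact hdem' h _ (hup _ hspos)
        rcases hσ3 (n + N0) with hc | hc
        · left
          rcases lt_or_eq_of_le ((hdem h _ (hpseqpos n)).1.1 i) with h1 | h1
          · exact h1
          · exfalso
            have hdm := hdem h _ (hpseqpos n)
            have h2 : (pseq n) i ≤ sstar := by
              rw [hpseq]
              simp only [Function.update_self]
              exact (hσ2 (n + N0)).le
            have h3 := demand_update_of_zero hdm h1.symm h2
            have h4 : IsDemand (R h) (Function.update q i sstar) (f h (pseq n)) := by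
              have he : Function.update (pseq n) i sstar = Function.update q i sstar := by
                rw [hpseq, Function.update_idem]
              rwa [he] at h3
            have h5 : f h (pseq n) = xs :=
              demand_unique hregh.1 hregh.2.2.2 h4 hdsstarx
            exact hc h5
        · right
          rcases lt_or_eq_of_le ((hdem' h _ (hpseqpos n)).1.1 i) with h1 | h1
          · exact h1
          · exfalso
            have hdm := hdem' h _ (hpseqpos n)
            have h2 : (pseq n) i ≤ sstar := by
              rw [hpseq]
              simp only [Function.update_self]
              exact (hσ2 (n + N0)).le
            have h3 := demand_update_of_zero hdm h1.symm h2
            have h4 : IsDemand (R' h) (Function.update q i sstar) (f' h (pseq n)) := by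
              have he : Function.update (pseq n) i sstar = Function.update q i sstar := by
                rw [hpseq, Function.update_idem]
              rwa [he] at h3
            have h5 : f' h (pseq n) = ys :=
              demand_unique hregh'.1 hregh'.2.2.2 h4 hdsstary
            exact hc h5
      -- pick a single good index and contradict the induction hypothesis
      obtain ⟨n, hn1, hn2⟩ := (hevne.and hevcov).exists
      have hcard2 : (Finset.univ.filter
          (fun j => f h (pseq n) j = 0 ∧ f' h (pseq n) j = 0)).card ≤ k := by
        have hsub : Finset.univ.filter
            (fun j => f h (pseq n) j = 0 ∧ f' h (pseq n) j = 0) ⊆ CZ.erase i := by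
          intro j hjmem
          have hjz := (Finset.mem_filter.mp hjmem).2
          rw [Finset.mem_erase]
          constructor
          · intro hji
            rcases hipos n with h1 | h1
            · rw [hji] at hjz
              rw [hjz.1] at h1
              exact lt_irrefl _ h1
            · rw [hji] at hjz
              rw [hjz.2] at h1
              exact lt_irrefl _ h1
          · by_contra hjincz
            rcases hn2 j hjincz with h1 | h1
            · rw [hjz.1] at h1
              exact lt_irrefl _ h1
            · rw [hjz.2] at h1
              exact lt_irrefl _ h1
        calc (Finset.univ.filter
            (fun j => f h (pseq n) j = 0 ∧ f' h (pseq n) j = 0)).card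
            ≤ (CZ.erase i).card := Finset.card_le_card hsub
          _ = CZ.card - 1 := Finset.card_erase_of_mem hiCZ
          _ ≤ k := by omega
      have heq := ih (pseq n) (hpseqpos n) hcard2
      exact hn1 (congrFun heq j0)

end Helpers7
/-- two preference profiles generate the same aggregate demand
function iff they generate the same equilibrium price correspondence. -/
theorem statement11 (hL : 0 < L) (hH : 0 < H)
    (R R' : Fin H → Pref L)
    (f f' : Fin H → (Fin L → ℝ) → (Fin L → ℝ))
    (hreg : ∀ h, Regular (R h)) (hreg' : ∀ h, Regular (R' h))
    (hdem : ∀ h q, posv q → IsDemand (R h) q (f h q))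
    (hdem' : ∀ h q, posv q → IsDemand (R' h) q (f' h q)) :
    (∀ (p : Fin L → ℝ) (ww : Fin H → ℝ), posv p → (∀ h, 0 < ww h) →
        aggDem f p ww = aggDem f' p ww) ↔
    (∀ eprof : Fin H → Fin L → ℝ, (∀ h, posv (eprof h)) →
        ∀ p : Fin L → ℝ, EqPrice f eprof p ↔ EqPrice f' eprof p) := by
  have hLne : Nonempty (Fin L) := ⟨⟨0, hL⟩⟩
  constructor
  · -- aggregate demand equality implies equal equilibrium correspondences
    intro hAgg eprof hepos p
    have hsym : ∀ (F F' : Fin H → (Fin L → ℝ) → (Fin L → ℝ)),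
        (∀ (p2 : Fin L → ℝ) (ww : Fin H → ℝ), posv p2 → (∀ h, 0 < ww h) →
          aggDem F p2 ww = aggDem F' p2 ww) →
        EqPrice F eprof p → EqPrice F' eprof p := by
      intro F F' hA hEq
      obtain ⟨hsimp, hsum⟩ := hEq
      refine ⟨hsimp, ?_⟩
      intro i
      have hwpos : ∀ h, 0 < dot p (eprof h) := by
        intro h
        exact Finset.sum_pos (fun j _ => mul_pos (hsimp.1 j) (hepos h j))
          Finset.univ_nonempty
      have hAg := hA p (fun h => dot p (eprof h)) hsimp.1 hwpos
      have h1 := congrFun hAg i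
      unfold aggDem at h1
      have h2 := hsum i
      rw [Finset.sum_sub_distrib] at h2 ⊢
      linarith [h1, h2]
    constructor
    · exact hsym f f' hAgg
    · exact hsym f' f (fun p2 ww h1 h2 => (hAgg p2 ww h1 h2).symm)
  · -- equal equilibrium correspondences imply equal aggregate demand
    intro hRHS p ww hp hww
    have hP : ∀ (q : Fin L → ℝ) (v : Fin H → ℝ), posv q → (∀ g, 0 < v g) →
        (∀ i, 0 < ∑ g, f g (fun j => q j / v g) i) →
        ∀ i, ∑ g, f g (fun j => q j / v g) i = ∑ g, f' g (fun j => q j / v g) i := by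
      intro q v hq hv hA
      exact P_of_RHS (R' := R') hL hH hreg hdem
        (fun ep hep p2 => (hRHS ep hep p2).1) hq hv hA
    have hMAIN : ∀ (h : Fin H) (qq : Fin L → ℝ), posv qq → f h qq = f' h qq := by
      intro h qq hqq
      apply main_eq hL hH hreg hreg' hdem hdem' hP h L qq hqq
      calc (Finset.univ.filter (fun i => f h qq i = 0 ∧ f' h qq i = 0)).card
          ≤ (Finset.univ : Finset (Fin L)).card := Finset.card_filter_le _ _
        _ = L := Finset.card_fin L
    funext i
    unfold aggDem
    apply Finset.sum_congr rfl
    intro h _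
    rw [hMAIN h (fun j => p j / ww h) (fun j => div_pos (hp j) (hww h))]

end Paper
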